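/- Let X ∈ ℝ_+^{V×D} and λ > 0. If (W, H) is a global minimizer of D_KL(X‖WH) over the set {(W, H) : every column of W lies in Δ_{V−1}, H ∈ ℝ_+^{K×D}}, then (W, (1/(1+λ))H) is a global minimizer of D_KL(X‖WH) + λ‖H‖₁ over the same set. Conversely, if (W, H) is a global minimizer of D_KL(X‖WH) + λ‖H‖₁ over this set, then (W, (1+λ)H) is a global minimizer of D_KL(X‖WH) over this set. In particular, the Lasso penalty with an ℓ1 normalization constraint on W merely rescales the solutions and cannot induce any sparsity in H. -/

import Mathlib

/-- Matrix product `(WH)_{vd} = ∑ k, w_{vk} h_{kd}`. -/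
noncomputable def matMul {V K D : ℕ} (W : Fin V → Fin K → ℝ) (H : Fin K → Fin D → ℝ) :
    Fin V → Fin D → ℝ := fun v d => ∑ k, W v k * H k d

/-- A single term `x log(x/y) - x + y` of the generalized Kullback--Leibler divergence,
with the conventions `0 log 0 = 0` and `x log(x/0) = +∞` for `x > 0`. -/
noncomputable def klTerm (x y : ℝ) : EReal :=
  if x = 0 then (y : EReal)
  else if y = 0 then ⊤
  else ((x * Real.log (x / y) - x + y : ℝ) : EReal)

/-- Generalized Kullback--Leibler divergence `D_KL(X ‖ Y)`. -/
noncomputable def klDiv {V D : ℕ} (X Y : Fin V → Fin D → ℝ) : EReal :=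
  ∑ v, ∑ d, klTerm (X v d) (Y v d)

private lemma ereal_coe_sum {α : Type*} (s : Finset α) (f : α → ℝ) :
    ((∑ i ∈ s, f i : ℝ) : EReal) = ∑ i ∈ s, (f i : EReal) :=
  map_sum (⟨⟨(fun x : ℝ => (x : EReal)), EReal.coe_zero⟩, EReal.coe_add⟩ : ℝ →+ EReal) f s

private lemma klTerm_scale (c x y : ℝ) (hc : 0 < c) :
    klTerm x (c * y) = klTerm x y + ((-(x * Real.log c) + (c - 1) * y : ℝ) : EReal) := by
  unfold klTerm
  by_cases hx : x = 0
  · simp only [if_pos hx]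
    rw [hx, ← EReal.coe_add, EReal.coe_eq_coe_iff]
    ring
  · have hc' : c ≠ 0 := hc.ne'
    by_cases hy : y = 0
    · rw [if_neg hx, if_neg hx, hy, mul_zero, if_pos rfl]
      exact (EReal.top_add_coe _).symm
    · have hcy : c * y ≠ 0 := mul_ne_zero hc' hy
      simp only [if_neg hx, if_neg hy, if_neg hcy, ← EReal.coe_add, EReal.coe_eq_coe_iff]
      have h1 : x / (c * y) = x / y / c := by rw [div_div, mul_comm]
      have h2 : Real.log (x / y / c) = Real.log (x / y) - Real.log c :=
        Real.log_div (div_ne_zero hx hy) hc'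
      rw [h1, h2]; ring

private lemma klDiv_scale {V D : ℕ} (X Y : Fin V → Fin D → ℝ) (c : ℝ) (hc : 0 < c) :
    klDiv X (fun v d => c * Y v d)
      = klDiv X Y
        + ((∑ v, ∑ d, (-(X v d * Real.log c) + (c - 1) * Y v d) : ℝ) : EReal) := by
  unfold klDiv
  simp only [klTerm_scale c _ _ hc]
  rw [ereal_coe_sum]
  simp only [ereal_coe_sum]
  rw [← Finset.sum_add_distrib]
  exact Finset.sum_congr rfl fun v _ => by rw [← Finset.sum_add_distrib]

private lemma sum_matMul {V K D : ℕ} (W : Fin V → Fin K → ℝ) (H : Fin K → Fin D → ℝ)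
    (hW1 : ∀ k, (∑ v, W v k) = 1) :
    ∑ v, ∑ d, matMul W H v d = ∑ k, ∑ d, H k d := by
  unfold matMul
  have : ∀ v : Fin V, ∑ d, ∑ k, W v k * H k d = ∑ k, W v k * ∑ d, H k d := by
    intro v
    rw [Finset.sum_comm]
    exact Finset.sum_congr rfl fun k _ => (Finset.mul_sum _ _ _).symm
  simp only [this]
  rw [Finset.sum_comm]
  refine Finset.sum_congr rfl fun k _ => ?_
  rw [← Finset.sum_mul, hW1 k, one_mul]

private lemma key_identity {V K D : ℕ} (X : Fin V → Fin D → ℝ)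
    (lam : ℝ) (hlam : 0 < lam)
    (W : Fin V → Fin K → ℝ) (H : Fin K → Fin D → ℝ)
    (hW1 : ∀ k, (∑ v, W v k) = 1) :
    klDiv X (matMul W (fun k d => H k d / (1 + lam)))
        + ((lam * ∑ k, ∑ d, H k d / (1 + lam) : ℝ) : EReal)
      = klDiv X (matMul W H)
        + ((Real.log (1 + lam) * ∑ v, ∑ d, X v d : ℝ) : EReal) := by
  have h1 : (0:ℝ) < 1 + lam := by linarith
  have hc : (0:ℝ) < (1 + lam)⁻¹ := inv_pos.mpr h1
  have hmm : matMul W (fun k d => H k d / (1 + lam))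
      = fun v d => (1 + lam)⁻¹ * matMul W H v d := by
    funext v d
    unfold matMul
    rw [Finset.mul_sum]
    refine Finset.sum_congr rfl fun k _ => ?_
    simp only [div_eq_mul_inv]; ring
  rw [hmm, klDiv_scale X (matMul W H) _ hc, add_assoc, ← EReal.coe_add]
  congr 1
  rw [EReal.coe_eq_coe_iff]
  have hlog : Real.log ((1 + lam)⁻¹) = -Real.log (1 + lam) := Real.log_inv _
  have hsplit : ∑ v, ∑ d, (-(X v d * Real.log ((1 + lam)⁻¹))
        + ((1 + lam)⁻¹ - 1) * matMul W H v d)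
      = Real.log (1 + lam) * (∑ v, ∑ d, X v d)
        + ((1 + lam)⁻¹ - 1) * (∑ v, ∑ d, matMul W H v d) := by
    rw [Finset.mul_sum, Finset.mul_sum, ← Finset.sum_add_distrib]
    refine Finset.sum_congr rfl fun v _ => ?_
    rw [Finset.mul_sum, Finset.mul_sum, ← Finset.sum_add_distrib]
    refine Finset.sum_congr rfl fun d _ => ?_
    rw [hlog]; ring
  have hpen : ∑ k, ∑ d, H k d / (1 + lam) = (1 + lam)⁻¹ * ∑ k, ∑ d, H k d := by
    rw [Finset.mul_sum]
    refine Finset.sum_congr rfl fun k _ => ?_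
    rw [Finset.mul_sum]
    exact Finset.sum_congr rfl fun d _ => by field_simp
  rw [hsplit, hpen, sum_matMul W H hW1]
  have hz : ((1 + lam)⁻¹ - 1) + lam * (1 + lam)⁻¹ = 0 := by field_simp; ring
  linear_combination (∑ k, ∑ d, H k d) * hz

/-- A Lasso penalty on `H` together with an ℓ1 normalization constraint on the columns
of `W` merely rescales the solutions of NMF and cannot induce any sparsity in `H`:
minimizers of the unpenalized and of the ℓ1-penalized problems over the constrained set
correspond to each other via `H ↦ H/(1+λ)` and `H ↦ (1+λ)H`. -/
theorem lasso_penalty_insufficient {V K D : ℕ}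
    (X : Fin V → Fin D → ℝ) (hX : ∀ v d, 0 ≤ X v d)
    (lam : ℝ) (hlam : 0 < lam) :
    -- a minimizer of D_KL gives a minimizer of the penalized objective after rescaling
    (∀ (W : Fin V → Fin K → ℝ) (H : Fin K → Fin D → ℝ),
      (∀ v k, 0 ≤ W v k) → (∀ k, (∑ v, W v k) = 1) → (∀ k d, 0 ≤ H k d) →
      (∀ (W' : Fin V → Fin K → ℝ) (H' : Fin K → Fin D → ℝ),
        (∀ v k, 0 ≤ W' v k) → (∀ k, (∑ v, W' v k) = 1) → (∀ k d, 0 ≤ H' k d) →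
        klDiv X (matMul W H) ≤ klDiv X (matMul W' H')) →
      (∀ (W' : Fin V → Fin K → ℝ) (H' : Fin K → Fin D → ℝ),
        (∀ v k, 0 ≤ W' v k) → (∀ k, (∑ v, W' v k) = 1) → (∀ k d, 0 ≤ H' k d) →
        klDiv X (matMul W (fun k d => H k d / (1 + lam)))
            + ((lam * ∑ k, ∑ d, H k d / (1 + lam) : ℝ) : EReal)
          ≤ klDiv X (matMul W' H') + ((lam * ∑ k, ∑ d, H' k d : ℝ) : EReal))) ∧
    -- conversely, a minimizer of the penalized objective gives a minimizer of D_KL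
    (∀ (W : Fin V → Fin K → ℝ) (H : Fin K → Fin D → ℝ),
      (∀ v k, 0 ≤ W v k) → (∀ k, (∑ v, W v k) = 1) → (∀ k d, 0 ≤ H k d) →
      (∀ (W' : Fin V → Fin K → ℝ) (H' : Fin K → Fin D → ℝ),
        (∀ v k, 0 ≤ W' v k) → (∀ k, (∑ v, W' v k) = 1) → (∀ k d, 0 ≤ H' k d) →
        klDiv X (matMul W H) + ((lam * ∑ k, ∑ d, H k d : ℝ) : EReal)
          ≤ klDiv X (matMul W' H') + ((lam * ∑ k, ∑ d, H' k d : ℝ) : EReal)) →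
      (∀ (W' : Fin V → Fin K → ℝ) (H' : Fin K → Fin D → ℝ),
        (∀ v k, 0 ≤ W' v k) → (∀ k, (∑ v, W' v k) = 1) → (∀ k d, 0 ≤ H' k d) →
        klDiv X (matMul W (fun k d => (1 + lam) * H k d))
          ≤ klDiv X (matMul W' H'))) := by
  have h1 : (0:ℝ) < 1 + lam := by linarith
  have h1' : (1 + lam : ℝ) ≠ 0 := h1.ne'
  constructor
  · intro W H hW hW1 hH hmin W' H' hW' hW1' hH'
    have e1 := key_identity X lam hlam W H hW1
    have e2 := key_identity X lam hlam W' (fun k d => (1 + lam) * H' k d) hW1'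
    simp only [mul_div_cancel_left₀ _ h1'] at e2
    rw [e1, e2]
    exact add_le_add_left
      (hmin W' (fun k d => (1 + lam) * H' k d) hW' hW1'
        (fun k d => mul_nonneg h1.le (hH' k d))) _
  · intro W H hW hW1 hH hmin W' H' hW' hW1' hH'
    have e1 := key_identity X lam hlam W (fun k d => (1 + lam) * H k d) hW1
    simp only [mul_div_cancel_left₀ _ h1'] at e1
    have e2 := key_identity X lam hlam W' H' hW1'
    have hle := hmin W' (fun k d => H' k d / (1 + lam)) hW' hW1'
      (fun k d => div_nonneg (hH' k d) h1.le)
    rw [e1] at hle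
    rw [e2] at hle
    exact (EReal.addLECancellable_coe _).add_le_add_iff_right.mp hle
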